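/- Let (R, ≤) be an ordered structure on a real vector space V induced by a basis (e_λ) (x ≤ y iff all coordinates of x are ≤ those of y), and let φ_λ be linear functionals with φ_λ(e_μ) ≥ 0 for λ ≠ μ. Suppose x ∈ V admits a Zariski decomposition x = y + z, i.e.: y is nef (φ_λ(y) ≥ 0 for all λ), z ≥ 0, φ_λ(y) = 0 for every λ in the support of z, and the only element w of the cone Σ_{λ ∈ Supp(z)} ℝ_{≥0} e_λ with φ_λ(w) ≥ 0 for all λ ∈ Supp(z) is w = 0. Then this decomposition is unique: if x = y' + z' is another decomposition with the same four properties, then y = y' and z = z'. -/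

import Mathlib

lemma aux_nonneg {Λ V : Type*} [AddCommGroup V] [Module ℝ V]
    (B : Module.Basis Λ ℝ V) (φl : V →ₗ[ℝ] ℝ) (q : Λ →₀ ℝ)
    (hq : ∀ m, 0 ≤ q m) (hφ : ∀ m ∈ q.support, 0 ≤ φl (B m)) :
    0 ≤ φl (B.repr.symm q) := by
  rw [Module.Basis.repr_symm_apply, Finsupp.linearCombination_apply, map_finsuppSum]
  refine Finset.sum_nonneg fun m hm => ?_
  simp only [map_smul, smul_eq_mul]
  exact mul_nonneg (hq m) (hφ m hm)

/-- `x = y + z` is a Zariski decomposition with respect to the system given by the basis `B`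
and the linear functionals `φ`: `y` is nef, `z` is coordinatewise nonnegative,
`φ l y = 0` for every `l` in the support of `z`, and the only coordinatewise nonnegative
vector supported in the support of `z` on which all the `φ l` (`l` in the support of `z`)
are nonnegative is `0`. -/
def IsZariskiDecomposition {Λ V : Type*} [AddCommGroup V] [Module ℝ V]
    (B : Module.Basis Λ ℝ V) (φ : Λ → V →ₗ[ℝ] ℝ) (x y z : V) : Prop :=
  x = y + z ∧
  (∀ l, 0 ≤ φ l y) ∧
  (∀ l, 0 ≤ B.repr z l) ∧
  (∀ l, B.repr z l ≠ 0 → φ l y = 0) ∧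
  (∀ w : V, (∀ l, 0 ≤ B.repr w l) → (∀ l, B.repr w l ≠ 0 → B.repr z l ≠ 0) →
    (∀ l, B.repr z l ≠ 0 → 0 ≤ φ l w) → w = 0)

theorem stmt17 {Λ V : Type*} [AddCommGroup V] [Module ℝ V]
    (B : Module.Basis Λ ℝ V) (φ : Λ → V →ₗ[ℝ] ℝ)
    (hφ : ∀ l m : Λ, l ≠ m → 0 ≤ φ l (B m))
    (x y z y' z' : V)
    (h : IsZariskiDecomposition B φ x y z)
    (h' : IsZariskiDecomposition B φ x y' z') :
    y = y' ∧ z = z' := by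
  obtain ⟨hx, hynef, hznn, hzy, hzmax⟩ := h
  obtain ⟨hx', hynef', hznn', hzy', hzmax'⟩ := h'
  set f := B.repr z with hf
  set g := B.repr z' with hg
  have hmax0 : max (0:ℝ) 0 - 0 = 0 := by simp
  set pf : Λ →₀ ℝ := Finsupp.zipWith (fun a b => max (a - b) 0) (by simp) f g with hpf
  set nf : Λ →₀ ℝ := Finsupp.zipWith (fun a b => max (b - a) 0) (by simp) f g with hnf
  set p : V := B.repr.symm pf with hp
  set n : V := B.repr.symm nf with hn
  have hrp : B.repr p = pf := B.repr.apply_symm_apply pf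
  have hrn : B.repr n = nf := B.repr.apply_symm_apply nf
  have hpfl : ∀ l, pf l = max (f l - g l) 0 := fun l => Finsupp.zipWith_apply
  have hnfl : ∀ l, nf l = max (g l - f l) 0 := fun l => Finsupp.zipWith_apply
  have hpfnn : ∀ l, 0 ≤ pf l := fun l => by rw [hpfl]; exact le_max_right _ _
  have hnfnn : ∀ l, 0 ≤ nf l := fun l => by rw [hnfl]; exact le_max_right _ _
  -- p = (y' - y) + n
  have hzz : y' - y = z - z' := by
    have h1 := hx.symm.trans hx'
    rw [sub_eq_sub_iff_add_eq_add, ← h1, add_comm]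
  have hpeq : p = (y' - y) + n := by
    apply B.repr.injective
    rw [hzz]
    ext l
    simp only [hrp, map_add, map_sub, Finsupp.add_apply, Finsupp.sub_apply, hrn,
      Finsupp.coe_add, Pi.add_apply, hpfl, hnfl]
    rcases le_total (f l) (g l) with hle | hle
    · rw [max_eq_right (by linarith), max_eq_left (by linarith)]
      show _ = f l - g l + _
      ring
    · rw [max_eq_left (by linarith), max_eq_right (by linarith)]
      show _ = f l - g l + _
      ring
  have hneq : n = (y - y') + p := by
    rw [hpeq]; abel
  -- p = 0
  have hp0 : p = 0 := by
    apply hzmax p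
    · intro l; rw [hrp]; exact hpfnn l
    · intro l hl
      rw [hrp] at hl
      rw [hpfl] at hl
      intro hz0
      have hg0 := hznn' l
      rw [hz0] at hl
      exact hl (max_eq_right (by linarith))
    · intro l hl
      by_cases hnl : nf l = 0
      · have hφn : 0 ≤ φ l n := by
          apply aux_nonneg B (φ l) nf hnfnn
          intro m hm
          refine hφ l m fun hlm => ?_
          rw [hlm] at hnl
          exact (Finsupp.mem_support_iff.mp hm) hnl
        have : φ l p = φ l y' - φ l y + φ l n := by
          rw [hpeq]; simp [map_add, map_sub]
        rw [this, hzy l hl]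
        have := hynef' l
        linarith
      · have hpl : pf l = 0 := by
          rw [hnfl] at hnl
          have : f l < g l := by
            by_contra hc
            push_neg at hc
            exact hnl (max_eq_right (by linarith))
          rw [hpfl, max_eq_right (by linarith)]
        rw [hp]
        apply aux_nonneg B (φ l) pf hpfnn
        intro m hm
        refine hφ l m fun hlm => ?_
        rw [hlm] at hpl
        exact (Finsupp.mem_support_iff.mp hm) hpl
  -- n = 0
  have hn0 : n = 0 := by
    apply hzmax' n
    · intro l; rw [hrn]; exact hnfnn l
    · intro l hl
      rw [hrn, hnfl] at hl
      intro hz0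
      have hf0 := hznn l
      rw [hz0] at hl
      exact hl (max_eq_right (by linarith))
    · intro l hl
      by_cases hpl : pf l = 0
      · have hφp : 0 ≤ φ l p := by
          apply aux_nonneg B (φ l) pf hpfnn
          intro m hm
          refine hφ l m fun hlm => ?_
          rw [hlm] at hpl
          exact (Finsupp.mem_support_iff.mp hm) hpl
        have : φ l n = φ l y - φ l y' + φ l p := by
          rw [hneq]; simp [map_add, map_sub]
        rw [this, hzy' l hl]
        have := hynef l
        linarith
      · have hnl : nf l = 0 := by
          rw [hpfl] at hpl
          have : g l < f l := by
            by_contra hc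
            push_neg at hc
            exact hpl (max_eq_right (by linarith))
          rw [hnfl, max_eq_right (by linarith)]
        rw [hn]
        apply aux_nonneg B (φ l) nf hnfnn
        intro m hm
        refine hφ l m fun hlm => ?_
        rw [hlm] at hnl
        exact (Finsupp.mem_support_iff.mp hm) hnl
  have hzz' : z = z' := by
    rw [hpeq, hn0] at hp0
    have h2 : y' - y = 0 := by simpa using hp0
    rw [h2] at hzz
    exact (sub_eq_zero.mp hzz.symm)
  refine ⟨?_, hzz'⟩
  have := hx.symm.trans hx'
  rw [hzz'] at this
  exact add_right_cancel this
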